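/- For n ≥ 1, the number of permutations π ∈ S_n having at least k cycles (fixed points counted as cycles) is at most n! · (log n)^{k-1}/(k-1)!. -/

import Mathlib

open Equiv Equiv.Perm Finset

section CycleCount

variable {β : Type*} [DecidableEq β] [Fintype β]

/-- general cycles count for a permutation of any finite type -/
def cc (σ : Perm β) : ℕ :=
  (Finset.univ.filter fun x => σ x = x).card + Multiset.card σ.cycleType

theorem cc_eq (σ : Perm β) :
    cc σ = Fintype.card β - σ.support.card + Multiset.card σ.cycleType := by
  have h : (Finset.univ.filter fun x => σ x = x) = σ.supportᶜ := by
    ext x; simp [Equiv.Perm.mem_support, not_not]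
  rw [cc, h, Finset.card_compl]

theorem swapMul_support {c : Perm β} {a b : β}
    (ha : c a = a) (hb : c b ≠ b) :
    (swap a b * c).support = insert a c.support := by
  have hab : a ≠ b := fun h => hb (by rw [← h]; exact ha)
  ext x
  simp only [mem_insert, mem_support, mul_apply]
  rcases eq_or_ne x a with rfl | hxa
  · simp [ha, swap_apply_left, hab.symm]
  · constructor
    · intro h
      right
      intro hcx
      rw [hcx] at h
      rcases eq_or_ne x b with rfl | hxb
      · exact hb hcx
      · exact h (swap_apply_of_ne_of_ne hxa hxb)
    · rintro (h | h)
      · exact absurd h hxa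
      · have hcxa : c x ≠ a := fun hh => hxa (c.injective (hh.trans ha.symm))
        rcases eq_or_ne (c x) b with hcb | hcb
        · rw [hcb, swap_apply_right]; exact Ne.symm hxa
        · rw [swap_apply_of_ne_of_ne hcxa hcb]; exact h

theorem isCycle_swapMul {c : Perm β} {a b : β}
    (hc : c.IsCycle) (ha : c a = a) (hb : c b ≠ b) : (swap a b * c).IsCycle := by
  have hab : a ≠ b := fun h => hb (by rw [← h]; exact ha)
  set g := swap a b * c with hg
  have hga : g a = b := by simp [hg, mul_apply, ha, swap_apply_left]
  have key : ∀ j : ℕ, ∃ i : ℕ, (g ^ i) a = (c ^ j) b := by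
    intro j
    induction j with
    | zero => exact ⟨1, by simpa using hga⟩
    | succ j ih =>
      obtain ⟨i, hi⟩ := ih
      rcases eq_or_ne ((c ^ (j + 1)) b) b with hwrap | hwrap
      · exact ⟨1, by rw [hwrap]; simpa using hga⟩
      · refine ⟨i + 1, ?_⟩
        have hfix : (c ^ (j + 1)) a = a := pow_apply_eq_self_of_apply_eq_self ha _
        have hne_a : (c ^ (j + 1)) b ≠ a := by
          intro hh
          have hba : b = a := (c ^ (j + 1)).injective (hh.trans hfix.symm)
          exact hb (by rw [hba, ha])
        rw [pow_succ', mul_apply, hi, hg, mul_apply, show c ((c ^ j) b) = (c ^ (j+1)) b by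
          rw [pow_succ', mul_apply], swap_apply_of_ne_of_ne hne_a hwrap]
  refine ⟨a, by rw [hga]; exact hab.symm, fun y hy => ?_⟩
  have hy' : y = a ∨ c y ≠ y := by
    by_contra hcon
    push_neg at hcon
    obtain ⟨hya, hcy⟩ := hcon
    have hyb : y ≠ b := fun h => hb (h ▸ hcy)
    exact hy (by rw [hg, mul_apply, hcy, swap_apply_of_ne_of_ne hya hyb])
  rcases hy' with rfl | hcy
  · exact ⟨0, rfl⟩
  · obtain ⟨i, -, hi⟩ := (hc.sameCycle hb hcy).exists_pow_eq'
    obtain ⟨m, hm⟩ := key i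
    exact ⟨m, by rw [zpow_natCast, hm, hi]⟩

/-- the key step: multiplying by a transposition one of whose points is fixed
merges two orbits, decreasing the number of cycles by one. -/
theorem cc_swap_mul {f : Perm β} {a b : β} (ha : f a = a) (hab : a ≠ b) :
    cc (swap a b * f) + 1 = cc f := by
  have hasupp : a ∉ f.support := by simp [ha]
  rcases eq_or_ne (f b) b with hb | hb
  · have hd : (swap a b).Disjoint f := by
      intro x
      rcases eq_or_ne x a with rfl | hxa
      · exact Or.inr ha
      rcases eq_or_ne x b with rfl | hxb
      · exact Or.inr hb
      · exact Or.inl (swap_apply_of_ne_of_ne hxa hxb)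
    have hct : Multiset.card (swap a b * f).cycleType
        = Multiset.card f.cycleType + 1 := by
      rw [hd.cycleType_mul, Multiset.card_add, (isCycle_swap hab).cycleType]
      simp [add_comm]
    have hs : (swap a b * f).support.card = f.support.card + 2 := by
      rw [hd.card_support_mul, card_support_swap hab, add_comm]
    have hle : f.support.card + 2 ≤ Fintype.card β := by
      rw [← hs]; exact Finset.card_le_card (Finset.subset_univ _) |>.trans
        (le_of_eq (Finset.card_univ))
    rw [cc_eq, cc_eq, hct, hs]
    omega
  · set c := f.cycleOf b with hcdef
    have hbmem : b ∈ f.support := mem_support.mpr hb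
    have hcmem : c ∈ f.cycleFactorsFinset := cycleOf_mem_cycleFactorsFinset_iff.mpr hbmem
    have hccyc : c.IsCycle := (mem_cycleFactorsFinset_iff.mp hcmem).1
    have hcsub : c.support ⊆ f.support := mem_cycleFactorsFinset_support_le hcmem
    have hca : c a = a := by
      have : a ∉ c.support := fun h => hasupp (hcsub h)
      simpa [Equiv.Perm.mem_support, not_not] using this
    have hcb : c b ≠ b := by rw [hcdef, cycleOf_apply_self]; exact hb
    set h := f * c⁻¹ with hhdef
    have hdisj : h.Disjoint c := disjoint_mul_inv_of_mem_cycleFactorsFinset hcmem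
    have hfeq : f = h * c := by rw [hhdef]; group
    have hha : h a = a := by
      rw [hhdef, mul_apply, show c⁻¹ a = a from c.injective (by rw [← Perm.mul_apply, mul_inv_cancel, Perm.one_apply, hca]), ha]
    have hhb : h b = b := (hdisj b).resolve_right hcb
    have hdswap : (swap a b).Disjoint h := by
      intro x
      rcases eq_or_ne x a with rfl | hxa
      · exact Or.inr hha
      rcases eq_or_ne x b with rfl | hxb
      · exact Or.inr hhb
      · exact Or.inl (swap_apply_of_ne_of_ne hxa hxb)
    have hmul : swap a b * f = h * (swap a b * c) := by
      rw [hfeq, ← mul_assoc, hdswap.commute.eq, mul_assoc]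
    have hg'cyc : (swap a b * c).IsCycle := isCycle_swapMul hccyc hca hcb
    have hg'supp : (swap a b * c).support = insert a c.support := swapMul_support hca hcb
    have hdisj2 : h.Disjoint (swap a b * c) := by
      rw [disjoint_iff_disjoint_support, hg'supp]
      rw [disjoint_iff_disjoint_support] at hdisj
      rw [Finset.disjoint_insert_right]
      exact ⟨by simpa [Equiv.Perm.mem_support, not_not] using hha, hdisj⟩
    have hanotc : a ∉ c.support := fun hmem => hasupp (hcsub hmem)
    have hct : Multiset.card (swap a b * f).cycleType = Multiset.card f.cycleType := by
      rw [hmul, hdisj2.cycleType_mul, hfeq, hdisj.cycleType_mul, Multiset.card_add, Multiset.card_add,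
        card_cycleType_eq_one.mpr hg'cyc, card_cycleType_eq_one.mpr hccyc]
    have hs : (swap a b * f).support.card = f.support.card + 1 := by
      rw [hmul, hdisj2.card_support_mul, hg'supp, Finset.card_insert_of_notMem hanotc,
        hfeq, hdisj.card_support_mul]
      ring
    have hle : f.support.card + 1 ≤ Fintype.card β := by
      rw [← hs]; exact (Finset.card_le_card (Finset.subset_univ _)).trans
        (le_of_eq Finset.card_univ)
    rw [cc_eq, cc_eq, hct, hs]
    omega

theorem cycleType_optionCongr (σ : Perm β) :
    cycleType (Equiv.optionCongr σ) = σ.cycleType := by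
  have hext : σ.extendDomain ((Equiv.optionIsSomeEquiv β).symm) = Equiv.optionCongr σ := by
    ext x
    cases x with
    | none => rw [extendDomain_apply_not_subtype σ _ (by simp)]; simp
    | some a =>
      rw [extendDomain_apply_subtype (h := by simp)]
      simp [Equiv.optionIsSomeEquiv]
  rw [← hext, cycleType_extendDomain]

theorem cc_optionCongr (σ : Perm β) : cc (Equiv.optionCongr σ) = cc σ + 1 := by
  have hfix : (Finset.univ.filter fun x : Option β => (Equiv.optionCongr σ) x = x)
      = insert none ((Finset.univ.filter fun a => σ a = a).map
          ⟨some, Option.some_injective β⟩) := by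
    ext x
    cases x with
    | none => simp
    | some a => simp [Function.Embedding.coeFn_mk]
  rw [cc, cc, hfix, Finset.card_insert_of_notMem (by simp), Finset.card_map,
    cycleType_optionCongr]
  ring

theorem cycleType_permCongr {γ : Type*} [DecidableEq γ] [Fintype γ]
    (φ : β ≃ γ) (σ : Perm β) : cycleType ((φ.permCongr) σ) = σ.cycleType := by
  have hext : σ.extendDomain (φ.trans (Equiv.subtypeUnivEquiv
      (fun _ : γ => trivial)).symm) = φ.permCongr σ := by
    ext x
    rw [extendDomain_apply_subtype (h := trivial)]
    simp [Equiv.subtypeUnivEquiv, Equiv.permCongr_apply]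
  rw [← hext, cycleType_extendDomain]

theorem cc_permCongr {γ : Type*} [DecidableEq γ] [Fintype γ]
    (φ : β ≃ γ) (σ : Perm β) : cc ((φ.permCongr) σ) = cc σ := by
  have hfix : (Finset.univ.filter fun x : γ => (φ.permCongr σ) x = x)
      = (Finset.univ.filter fun a => σ a = a).map φ.toEmbedding := by
    ext x
    rw [Finset.mem_filter, Finset.mem_map]
    simp only [Finset.mem_filter, Finset.mem_map, Finset.mem_univ, true_and,
      Equiv.permCongr_apply, Equiv.coe_toEmbedding]
    constructor
    · intro h
      refine ⟨φ.symm x, ?_, by simp⟩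
      have := congrArg φ.symm h
      simpa using this
    · rintro ⟨a, ha, rfl⟩
      simp [ha]
  rw [cc, cc, hfix, Finset.card_map, cycleType_permCongr]

end CycleCount

theorem decomposeFin_symm_eq {n : ℕ} (p : Fin (n+1)) (e : Perm (Fin n)) :
    Equiv.Perm.decomposeFin.symm (p, e)
      = ((finSuccEquiv n).symm.permCongr)
          (Equiv.Perm.decomposeOption.symm (finSuccEquiv n p, e)) := rfl

theorem cc_decomposeFin_zero {n : ℕ} (e : Perm (Fin n)) :
    cc (Equiv.Perm.decomposeFin.symm (0, e)) = cc e + 1 := by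
  rw [decomposeFin_symm_eq, cc_permCongr, Equiv.Perm.decomposeOption_symm_apply]
  simp only [finSuccEquiv_zero, swap_self]
  rw [show (Equiv.refl (Option (Fin n)) : Perm (Option (Fin n))) * Equiv.optionCongr e
      = Equiv.optionCongr e from one_mul _]
  exact cc_optionCongr e

theorem cc_decomposeFin_succ {n : ℕ} (i : Fin n) (e : Perm (Fin n)) :
    cc (Equiv.Perm.decomposeFin.symm (i.succ, e)) = cc e := by
  rw [decomposeFin_symm_eq, cc_permCongr, Equiv.Perm.decomposeOption_symm_apply]
  simp only [finSuccEquiv_succ]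
  have h := cc_swap_mul (f := Equiv.optionCongr e) (a := (none : Option (Fin n)))
    (b := some i) (by simp) (by simp)
  have h2 := cc_optionCongr e
  omega

theorem count_succ (n k : ℕ) (hk : 1 ≤ k) :
    (Finset.univ.filter fun π : Perm (Fin (n+1)) => k ≤ cc π).card
      = (Finset.univ.filter fun e : Perm (Fin n) => k - 1 ≤ cc e).card
        + n * (Finset.univ.filter fun e : Perm (Fin n) => k ≤ cc e).card := by
  rw [Finset.card_filter, Finset.card_filter, Finset.card_filter]
  rw [← Equiv.sum_comp (Equiv.Perm.decomposeFin.symm :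
      Fin (n+1) × Perm (Fin n) ≃ Perm (Fin (n+1)))
      (fun π => if k ≤ cc π then 1 else 0)]
  rw [Fintype.sum_prod_type, Fin.sum_univ_succ]
  congr 1
  · apply Finset.sum_congr rfl
    intro e _
    rw [cc_decomposeFin_zero]
    congr 1
    simp only [eq_iff_iff]
    omega
  · have heach : ∀ i : Fin n, (∑ e : Perm (Fin n),
        if k ≤ cc (Equiv.Perm.decomposeFin.symm (Fin.succ i, e)) then 1 else 0)
        = ∑ e : Perm (Fin n), if k ≤ cc e then 1 else 0 := by
      intro i
      apply Finset.sum_congr rfl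
      intro e _
      rw [cc_decomposeFin_succ]
    calc (∑ i : Fin n, ∑ e : Perm (Fin n),
            if k ≤ cc (Equiv.Perm.decomposeFin.symm (Fin.succ i, e)) then 1 else 0)
        = ∑ _i : Fin n, ∑ e : Perm (Fin n), if k ≤ cc e then 1 else 0 :=
          Finset.sum_congr rfl fun i _ => heach i
      _ = n * ∑ e : Perm (Fin n), if k ≤ cc e then 1 else 0 := by
          rw [Finset.sum_const, Finset.card_univ, Fintype.card_fin, smul_eq_mul]

theorem pow_succ_ineq (m : ℕ) {a h : ℝ} (ha : 0 ≤ a) (hh : 0 ≤ h) :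
    a ^ (m + 1) + (m + 1 : ℝ) * a ^ m * h ≤ (a + h) ^ (m + 1) := by
  induction m with
  | zero => simp
  | succ m ih =>
    have hexp : (a + h) * (a ^ (m + 1) + ((m : ℝ) + 1) * a ^ m * h)
        = a ^ (m + 2) + ((m : ℝ) + 2) * a ^ (m + 1) * h + ((m : ℝ) + 1) * (a ^ m * (h * h)) := by
      ring
    have h2 : a ^ (m + 2) + ((m : ℝ) + 2) * a ^ (m + 1) * h
        ≤ (a + h) * (a ^ (m + 1) + ((m : ℝ) + 1) * a ^ m * h) := by
      rw [hexp]
      have : (0:ℝ) ≤ ((m : ℝ) + 1) * (a ^ m * (h * h)) := by positivity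
      linarith
    have h3 : (a + h) * (a ^ (m + 1) + ((m : ℝ) + 1) * a ^ m * h) ≤ (a + h) ^ (m + 2) :=
      calc (a + h) * (a ^ (m + 1) + ((m : ℝ) + 1) * a ^ m * h)
          ≤ (a + h) * (a + h) ^ (m + 1) := mul_le_mul_of_nonneg_left ih (by positivity)
        _ = (a + h) ^ (m + 2) := by ring
    push_cast
    ring_nf
    ring_nf at h2 h3
    linarith

theorem log_succ_ge (n : ℕ) (hn : 1 ≤ n) :
    Real.log n + 1 / ((n : ℝ) + 1) ≤ Real.log ((n : ℝ) + 1) := by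
  have hn0 : (0 : ℝ) < n := by exact_mod_cast hn
  have h := Real.log_le_sub_one_of_pos (x := (n : ℝ) / ((n : ℝ) + 1)) (by positivity)
  rw [Real.log_div (by positivity) (by positivity)] at h
  have heq : (n : ℝ) / ((n : ℝ) + 1) - 1 = -(1 / ((n : ℝ) + 1)) := by
    field_simp
    ring
  rw [heq] at h
  linarith

theorem analytic_step (n m : ℕ) (hn : 1 ≤ n) :
    (n.factorial : ℝ) * Real.log n ^ m / m.factorial
      + n * ((n.factorial : ℝ) * Real.log n ^ (m + 1) / (m + 1).factorial)
    ≤ ((n + 1).factorial : ℝ) * Real.log ((n : ℝ) + 1) ^ (m + 1) / (m + 1).factorial := by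
  set L := Real.log n with hLdef
  set M := Real.log ((n : ℝ) + 1) with hMdef
  have hL : 0 ≤ L := Real.log_nonneg (by exact_mod_cast hn)
  have hM : L + 1 / ((n : ℝ) + 1) ≤ M := log_succ_ge n hn
  have hpow := pow_succ_ineq m hL (by positivity : (0:ℝ) ≤ 1 / ((n : ℝ) + 1))
  have hMP : L ^ (m + 1) + (m + 1 : ℝ) * L ^ m * (1 / ((n : ℝ) + 1)) ≤ M ^ (m + 1) :=
    hpow.trans (pow_le_pow_left₀ (by positivity) hM (m + 1))
  have hfinal : ((m : ℝ) + 1) * L ^ m + n * L ^ (m + 1) ≤ ((n : ℝ) + 1) * M ^ (m + 1) := by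
    have hc := mul_le_mul_of_nonneg_left hMP (by positivity : (0:ℝ) ≤ (n : ℝ) + 1)
    have hexp : ((n : ℝ) + 1) * (L ^ (m + 1) + (m + 1 : ℝ) * L ^ m * (1 / ((n : ℝ) + 1)))
        = ((n : ℝ) + 1) * L ^ (m + 1) + ((m : ℝ) + 1) * L ^ m := by
      field_simp
    rw [hexp] at hc
    nlinarith [pow_nonneg hL (m + 1)]
  have hF : (0 : ℝ) < n.factorial := by exact_mod_cast n.factorial_pos
  have hGm : (0 : ℝ) < m.factorial := by exact_mod_cast m.factorial_pos
  have hfacsucc : ((m + 1).factorial : ℝ) = ((m : ℝ) + 1) * m.factorial := by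
    rw [Nat.factorial_succ]; push_cast; ring
  have hnfacsucc : (((n + 1).factorial : ℝ)) = ((n : ℝ) + 1) * n.factorial := by
    rw [Nat.factorial_succ]; push_cast; ring
  rw [hfacsucc, hnfacsucc]
  have key : (n.factorial : ℝ) * L ^ m / m.factorial
      + n * ((n.factorial : ℝ) * L ^ (m + 1) / (((m : ℝ) + 1) * m.factorial))
      = (n.factorial : ℝ) * (((m : ℝ) + 1) * L ^ m + n * L ^ (m + 1))
          / (((m : ℝ) + 1) * m.factorial) := by
    field_simp
  have key2 : ((n : ℝ) + 1) * (n.factorial : ℝ) * M ^ (m + 1) / (((m : ℝ) + 1) * m.factorial)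
      = (n.factorial : ℝ) * (((n : ℝ) + 1) * M ^ (m + 1)) / (((m : ℝ) + 1) * m.factorial) := by
    ring
  rw [key, key2]
  gcongr

theorem main_bound : ∀ n : ℕ, 1 ≤ n → ∀ k : ℕ, 1 ≤ k →
    ((Finset.univ.filter fun π : Perm (Fin n) => k ≤ cc π).card : ℝ)
      ≤ (n.factorial : ℝ) * Real.log n ^ (k - 1) / (k - 1).factorial := by
  intro n hn
  induction n, hn using Nat.le_induction with
  | base =>
    intro k hk
    have hcc : ∀ π : Perm (Fin 1), cc π = 1 := by
      intro π
      rw [Subsingleton.elim π 1]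
      simp [cc, Equiv.Perm.cycleType_one, Finset.filter_true_of_mem]
    rcases eq_or_lt_of_le hk with rfl | hk2
    · have hle : (Finset.univ.filter fun π : Perm (Fin 1) => 1 ≤ cc π).card
          ≤ Fintype.card (Perm (Fin 1)) := by
        rw [← Finset.card_univ]; exact Finset.card_filter_le _ _
      rw [Fintype.card_perm, Fintype.card_fin] at hle
      simp only [Nat.sub_self, pow_zero, Nat.factorial_zero, Nat.factorial_one]
      norm_num
      exact_mod_cast hle
    · have hempty : (Finset.univ.filter fun π : Perm (Fin 1) => k ≤ cc π) = ∅ := by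
        apply Finset.filter_false_of_mem
        intro π _
        rw [hcc π]
        omega
      rw [hempty]
      simp only [Finset.card_empty, Nat.cast_zero, Nat.cast_one, Real.log_one]
      rw [zero_pow (by omega : k - 1 ≠ 0)]
      simp
  | succ n hn ih =>
    intro k hk
    rcases eq_or_lt_of_le hk with rfl | hk2
    · have hle : (Finset.univ.filter fun π : Perm (Fin (n+1)) => 1 ≤ cc π).card
          ≤ Fintype.card (Perm (Fin (n+1))) := by
        rw [← Finset.card_univ]; exact Finset.card_filter_le _ _
      rw [Fintype.card_perm, Fintype.card_fin] at hle
      simp only [Nat.sub_self, pow_zero, Nat.factorial_zero, mul_one, Nat.cast_one, div_one]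
      exact_mod_cast hle
    · obtain ⟨m, rfl⟩ : ∃ m, k = m + 2 := ⟨k - 2, by omega⟩
      rw [count_succ n (m + 2) (by omega)]
      push_cast
      have h1 := ih (m + 1) (by omega)
      have h2 := ih (m + 2) (by omega)
      simp only [Nat.add_sub_cancel] at h1 h2 ⊢
      have hstep := analytic_step n m hn
      have hn0 : (0 : ℝ) ≤ (n : ℝ) := by positivity
      calc ((Finset.univ.filter fun e : Perm (Fin n) => m + 2 - 1 ≤ cc e).card : ℝ)
            + n * ((Finset.univ.filter fun e : Perm (Fin n) => m + 2 ≤ cc e).card : ℝ)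
          ≤ (n.factorial : ℝ) * Real.log n ^ m / m.factorial
            + n * ((n.factorial : ℝ) * Real.log n ^ (m + 1) / (m + 1).factorial) := by
            apply add_le_add
            · have : m + 2 - 1 = m + 1 := by omega
              rw [this]
              simpa using h1
            · exact mul_le_mul_of_nonneg_left (by simpa using h2) hn0
        _ ≤ ((n + 1).factorial : ℝ) * Real.log ((n : ℝ) + 1) ^ (m + 1) / (m + 1).factorial :=
            hstep

/-- total number of cycles of a permutation, counting fixed points as cycles
(= number of orbits on `{1,…,n}`). -/
def cyclesCount {n : ℕ} (π : Equiv.Perm (Fin n)) : ℕ :=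
  (Finset.univ.filter fun x => π x = x).card + Multiset.card π.cycleType

/-- for `n ≥ 1`, the number of permutations of `S_n` with at least `k`
cycles is at most `n! · (log n)^{k-1} / (k-1)!`. -/
theorem stmt8 (n k : ℕ) (hn : 1 ≤ n) (hk : 1 ≤ k) :
    ((Finset.univ.filter fun π : Equiv.Perm (Fin n) => k ≤ cyclesCount π).card : ℝ)
      ≤ (n.factorial : ℝ) * Real.log n ^ (k - 1) / (k - 1).factorial := by
  have : cyclesCount (n := n) = cc := rfl
  rw [this]
  exact main_bound n hn k hk
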